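/- For a matrix A in SU(1,1;ℂ), η(A) is the 3×3 identity matrix if and only if A = I or A = −I; that is, the kernel of η is {±I}, so η is two-to-one onto its image. -/
import Mathlib


open Matrix

noncomputable section

/-- The matrix `J = diag(1, -1)` in `M₂(ℂ)`. -/
def Jc : Matrix (Fin 2) (Fin 2) ℂ := !![1, 0; 0, -1]

/-- `SU(1,1;ℂ) = {A ∈ M₂(ℂ) : A*JA = J and det A = 1}`. -/
def SU11C : Set (Matrix (Fin 2) (Fin 2) ℂ) := {A | Aᴴ * Jc * A = Jc ∧ A.det = 1}

/-- The double covering map `η : SU(1,1;ℂ) → SO⁺(2,1)`, written with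
`a = A₀₀ = a₁ + a₂ i` and `b = A₀₁ = b₁ + b₂ i`. -/
def eta (A : Matrix (Fin 2) (Fin 2) ℂ) : Matrix (Fin 3) (Fin 3) ℝ :=
  let a1 := (A 0 0).re; let a2 := (A 0 0).im
  let b1 := (A 0 1).re; let b2 := (A 0 1).im
  !![1 - 2*a2^2 + 2*b1^2, -2*a1*a2 + 2*b1*b2, 2*a1*b1 - 2*a2*b2;
     2*a1*a2 + 2*b1*b2, 1 - 2*a2^2 + 2*b2^2, 2*a1*b2 + 2*a2*b1;
     2*a1*b1 + 2*a2*b2, 2*a1*b2 - 2*a2*b1, 1 + 2*b1^2 + 2*b2^2]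

theorem stmt17 (A : Matrix (Fin 2) (Fin 2) ℂ) (hA : A ∈ SU11C) :
    eta A = 1 ↔ (A = 1 ∨ A = -1) := by
  obtain ⟨hJ, hdet⟩ := hA
  constructor
  · intro h
    have h22 := congrFun (congrFun h 2) 2
    have h00 := congrFun (congrFun h 0) 0
    simp [eta, Matrix.one_apply] at h22 h00
    have hb1 : (A 0 1).re = 0 := by nlinarith [sq_nonneg (A 0 1).re, sq_nonneg (A 0 1).im]
    have hb2 : (A 0 1).im = 0 := by nlinarith [sq_nonneg (A 0 1).re, sq_nonneg (A 0 1).im]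
    have ha2 : (A 0 0).im = 0 := by nlinarith [sq_nonneg (A 0 0).im]
    have hb : A 0 1 = 0 := Complex.ext hb1 hb2
    have e01 := congrFun (congrFun hJ 0) 1
    have e11 := congrFun (congrFun hJ 1) 1
    simp [Matrix.mul_apply, Jc, Fin.sum_univ_two, conjTranspose_apply, hb] at e01 e11
    have hd : A 1 1 ≠ 0 := by
      intro h0; rw [h0] at e11; simp at e11
    have hc : A 1 0 = 0 := by
      rcases e01 with e01 | e01
      · exact e01
      · exact absurd e01 hd
    have hdet' := hdet
    rw [Matrix.det_fin_two, hb, hc] at hdet'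
    simp at hdet'
    have hA00 : A 0 0 = (starRingEnd ℂ) (A 1 1) :=
      mul_right_cancel₀ hd (hdet'.trans e11.symm)
    have hA11 : A 1 1 = A 0 0 := by
      have h2 := congrArg (starRingEnd ℂ) hA00
      rw [Complex.conj_conj] at h2
      rw [← h2, Complex.conj_eq_iff_im.mpr ha2]
    have hsq : A 0 0 ^ 2 = 1 := by
      rw [hA11] at hdet'; rw [sq]; exact hdet'
    have hcases : A 0 0 = 1 ∨ A 0 0 = -1 := by
      have : (A 0 0 - 1) * (A 0 0 + 1) = 0 := by ring_nf; linear_combination hsq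
      rcases mul_eq_zero.mp this with h1 | h1
      · left; linear_combination h1
      · right; linear_combination h1
    rcases hcases with h1 | h1
    · left; ext i j; fin_cases i <;> fin_cases j <;>
        simp [Matrix.one_apply, hb, hc, h1, hA11.trans h1]
    · right; ext i j; fin_cases i <;> fin_cases j <;>
        simp [Matrix.one_apply, hb, hc, h1, hA11.trans h1]
  · rintro (rfl | rfl) <;>
    · ext i j
      fin_cases i <;> fin_cases j <;>
        simp [eta, Matrix.one_apply, Matrix.vecHead, Matrix.vecTail]
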